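/- arXiv:2604.02989 — 8 statements merged into one kernel-verified Lean document; each statement's English description precedes it below -/
import Mathlib

section
/- Let m ≥ 1 and let D = Σ_{t=1}^{m} T(m,t) (the total number of even set partitions of {1,…,2m}). Then, in the polynomial ring ℂ[δ], det Γ²_{2m} = δ^{D} · ∏_{k=1}^{m−1} (δ − k)^{D − Σ_{t=1}^{k} T(m,t)}. -/
/- Set partitions of a finite set are modelled as equivalence relations, i.e. `Setoid`.
   `nBlocks` is the number of blocks (equivalence classes), `p ⊔ q` is the join,
   `IsEvenPartition` says every block has even cardinality, `T m t` counts even set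
   partitions of a `2*m`-element set into exactly `t` blocks, and `Gram2 m` is the Gram
   matrix of the spine standard module of the 2-tonal partition algebra, over `ℂ[δ]`
   (with `δ = Polynomial.X`). -/

open scoped Classical

noncomputable section

def nBlocks {X : Type*} (s : Setoid X) : ℕ := Nat.card (Quotient s)

def IsEvenPartition {X : Type*} (s : Setoid X) : Prop :=
  ∀ x : X, Even (Nat.card {y : X // s.r x y})

def T (m t : ℕ) : ℕ :=
  Nat.card {s : Setoid (Fin (2 * m)) // IsEvenPartition s ∧ nBlocks s = t}

instance {X : Type*} [Finite X] : Finite (Setoid X) :=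
  Finite.of_injective (fun s : Setoid X => (s.r : X → X → Prop)) fun s t h => by
    cases s; cases t; cases h; rfl

noncomputable instance (m : ℕ) : Fintype {s : Setoid (Fin (2 * m)) // IsEvenPartition s} :=
  Fintype.ofFinite _

def Gram2 (m : ℕ) :
    Matrix {s : Setoid (Fin (2 * m)) // IsEvenPartition s}
      {s : Setoid (Fin (2 * m)) // IsEvenPartition s} (Polynomial ℂ) :=
  Matrix.of fun p q => (Polynomial.X : Polynomial ℂ) ^ nBlocks (p.1 ⊔ q.1)
namespace G2Aux

open Polynomial Finset

noncomputable def fall (n : ℕ) : Polynomial ℂ := ∏ j ∈ Finset.range n, (X - C (j : ℂ))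

lemma cast_descFactorial (N b : ℕ) :
    ((N.descFactorial b : ℂ)) = ∏ j ∈ Finset.range b, ((N : ℂ) - j) := by
  induction b with
  | zero => simp
  | succ b ih =>
    rw [Finset.prod_range_succ, ← ih, Nat.descFactorial_succ]
    by_cases h : b ≤ N
    · rw [Nat.cast_mul, Nat.cast_sub h, mul_comm]
    · rw [Nat.descFactorial_eq_zero_iff_lt.mpr (by omega : N < b)]
      simp

noncomputable def kerEmb {α β : Type*} (f : α → β) : Quotient (Setoid.ker f) ↪ β where
  toFun := Quotient.lift f fun _ _ h => h
  inj' := by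
    rintro ⟨a⟩ ⟨b⟩ h
    exact Quotient.sound (h : f a = f b)

lemma emb_heq {α β : Type*} {σ τ : Setoid α} (h : σ = τ) (g : Quotient σ ↪ β)
    (g' : Quotient τ ↪ β)
    (hg : ∀ x : α, g (Quotient.mk'' x) = g' (Quotient.mk'' x)) : HEq g g' := by
  subst h
  rw [heq_iff_eq]
  ext q
  induction q using Quotient.ind
  exact hg _

noncomputable def funEquivSigma (α β : Type*) : (α → β) ≃ Σ σ : Setoid α, (Quotient σ ↪ β) where
  toFun f := ⟨Setoid.ker f, kerEmb f⟩
  invFun p := p.2 ∘ Quotient.mk''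
  left_inv f := rfl
  right_inv := by
    rintro ⟨σ, g⟩
    have h : Setoid.ker (⇑g ∘ Quotient.mk'') = σ := by
      ext x y
      constructor
      · intro hxy
        exact Quotient.eq''.mp (g.injective hxy)
      · intro hxy
        exact congrArg g (Quotient.sound' hxy)
    exact Sigma.ext h (emb_heq h _ g fun x => rfl)

noncomputable instance {α : Type*} [Finite α] : Fintype (Setoid α) := Fintype.ofFinite _

noncomputable instance {α : Type*} [Finite α] (σ : Setoid α) : Fintype (Quotient σ) :=
  Fintype.ofFinite _

lemma sum_fall (α : Type*) [Fintype α] :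
    ∑ σ : Setoid α, fall (nBlocks σ) = X ^ (Fintype.card α) := by
  have key : ∀ N : ℕ, Polynomial.eval ((N : ℂ)) (∑ σ : Setoid α, fall (nBlocks σ)) =
      Polynomial.eval ((N : ℂ)) ((X : Polynomial ℂ) ^ Fintype.card α) := by
    intro N
    rw [eval_pow, eval_X, Polynomial.eval_finset_sum]
    have h1 : ∀ σ : Setoid α, Polynomial.eval ((N : ℂ)) (fall (nBlocks σ)) =
        ((Fintype.card (Quotient σ ↪ Fin N) : ℂ)) := by
      intro σ
      rw [Fintype.card_embedding_eq, Fintype.card_fin, cast_descFactorial, fall, eval_prod]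
      have hb : nBlocks σ = Fintype.card (Quotient σ) := Nat.card_eq_fintype_card
      rw [hb]
      simp
    simp_rw [h1]
    rw [← Nat.cast_sum]
    have h2 : ∑ σ : Setoid α, Fintype.card (Quotient σ ↪ Fin N) =
        Fintype.card (α → Fin N) := by
      rw [Fintype.card_congr (funEquivSigma α (Fin N)), Fintype.card_sigma]
    rw [h2, Fintype.card_fun, Fintype.card_fin, Nat.cast_pow]
  have hsub : (∑ σ : Setoid α, fall (nBlocks σ)) - X ^ Fintype.card α = 0 := by
    apply Polynomial.eq_zero_of_infinite_isRoot
    apply Set.Infinite.mono (s := Set.range (Nat.cast : ℕ → ℂ))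
    · rintro x ⟨N, rfl⟩
      simp only [Set.mem_setOf_eq, Polynomial.IsRoot, Polynomial.eval_sub, key N, sub_self]
    · exact Set.infinite_range_of_injective Nat.cast_injective
  linear_combination (norm := ring_nf) hsub

/-- classes of `s` sit inside classes of `r` when `s ≤ r`; evenness propagates up. -/
lemma isEven_of_le {α : Type*} [Finite α] {s r : Setoid α} (hs : IsEvenPartition s)
    (h : s ≤ r) : IsEvenPartition r := by
  intro x
  have := Fintype.ofFinite α
  let f : {y : α // r.r x y} → Quotient s := fun y => Quotient.mk'' y.1
  rw [Nat.card_congr (Equiv.sigmaFiberEquiv f).symm, Nat.card_eq_fintype_card,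
    Fintype.card_sigma]
  apply Finset.even_sum
  intro c _
  induction c using Quotient.ind with
  | _ z =>
  by_cases hz : r.r x z
  · have e : {a : {y : α // r.r x y} // f a = Quotient.mk'' z} ≃ {y : α // s.r z y} :=
      { toFun := fun a => ⟨a.1.1, Setoid.symm' s (Quotient.eq''.mp a.2)⟩
        invFun := fun y => ⟨⟨y.1, Setoid.trans' r hz (Setoid.le_def.mp h y.2)⟩,
          Quotient.sound' (Setoid.symm' s y.2)⟩
        left_inv := fun a => by ext; rfl
        right_inv := fun y => by ext; rfl }
    rw [← Nat.card_eq_fintype_card, Nat.card_congr e]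
    exact hs z
  · have : IsEmpty {a : {y : α // r.r x y} // f a = Quotient.mk'' z} := by
      constructor
      rintro ⟨⟨y, hy⟩, hc⟩
      exact hz (Setoid.trans' r hy (Setoid.le_def.mp h (Quotient.eq''.mp hc)))
    simp [Fintype.card_eq_zero]

/-- pushforward map on quotients. -/
def phi {α : Type*} (s r : Setoid α) (h : s ≤ r) : Quotient s → Quotient r :=
  Quotient.lift (Quotient.mk'') fun _ _ hab => Quotient.sound' (Setoid.le_def.mp h hab)

lemma phi_surjective {α : Type*} (s r : Setoid α) (h : s ≤ r) :
    Function.Surjective (phi s r h) := by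
  rintro ⟨x⟩
  exact ⟨Quotient.mk'' x, rfl⟩

/-- the interval above `s` is the partition lattice of the quotient. -/
def upEquiv {α : Type*} (s : Setoid α) : {r : Setoid α // s ≤ r} ≃ Setoid (Quotient s) where
  toFun r := Setoid.ker (phi s r.1 r.2)
  invFun σ := ⟨Setoid.comap Quotient.mk'' σ, fun {a b} hab =>
    show σ (Quotient.mk'' a) (Quotient.mk'' b) from Quotient.sound' hab ▸ σ.refl _⟩
  left_inv := by
    rintro ⟨r, hr⟩
    ext x y
    exact Quotient.eq''
  right_inv := by
    intro σ
    ext a b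
    induction a using Quotient.ind with
    | _ x =>
    induction b using Quotient.ind with
    | _ y =>
    exact Quotient.eq''

lemma nBlocks_upEquiv {α : Type*} (s : Setoid α) (r : {r : Setoid α // s ≤ r}) :
    nBlocks (upEquiv s r) = nBlocks r.1 :=
  Nat.card_congr (Setoid.quotientKerEquivOfSurjective _ (phi_surjective s r.1 r.2))

/-- even partitions of a nonempty finite set have between 1 and card/2 blocks. -/
lemma one_le_nBlocks {α : Type*} [Finite α] [Nonempty α] (s : Setoid α) : 1 ≤ nBlocks s := by
  have : Nonempty (Quotient s) := ⟨Quotient.mk'' (Classical.arbitrary α)⟩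
  exact Nat.card_pos

/-- fibers of the quotient map are the classes. -/
def fiberEquivClass {α : Type*} (s : Setoid α) (z : α) :
    {x : α // Quotient.mk'' x = (Quotient.mk'' z : Quotient s)} ≃ {y : α // s.r z y} where
  toFun x := ⟨x.1, Setoid.symm' s (Quotient.eq''.mp x.2)⟩
  invFun y := ⟨y.1, Quotient.sound' (Setoid.symm' s y.2)⟩
  left_inv x := by ext; rfl
  right_inv y := by ext; rfl

lemma two_nBlocks_le {α : Type*} [Fintype α] {s : Setoid α} (hs : IsEvenPartition s) :
    2 * nBlocks s ≤ Fintype.card α := by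
  have hcard : Fintype.card α = ∑ c : Quotient s, Fintype.card {x : α // Quotient.mk'' x = c} := by
    rw [← Fintype.card_sigma]
    exact Fintype.card_congr (Equiv.sigmaFiberEquiv _).symm
  have hge : ∀ c : Quotient s, 2 ≤ Fintype.card {x : α // Quotient.mk'' x = c} := by
    intro c
    induction c using Quotient.ind with
    | _ z =>
    show 2 ≤ Fintype.card {x : α // Quotient.mk'' x = (Quotient.mk'' z : Quotient s)}
    have hpos : 0 < Fintype.card {x : α // Quotient.mk'' x = (Quotient.mk'' z : Quotient s)} :=
      Fintype.card_pos_iff.mpr ⟨⟨z, rfl⟩⟩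
    have heven : Even (Fintype.card {x : α // Quotient.mk'' x = (Quotient.mk'' z : Quotient s)}) := by
      rw [← Nat.card_eq_fintype_card, Nat.card_congr (fiberEquivClass s z)]
      exact hs z
    obtain ⟨k, hk⟩ := heven
    omega
  calc 2 * nBlocks s = ∑ _c : Quotient s, 2 := by
        rw [Finset.sum_const, nBlocks, Nat.card_eq_fintype_card, Finset.card_univ,
          smul_eq_mul, mul_comm]
      _ ≤ ∑ c : Quotient s, Fintype.card {x : α // Quotient.mk'' x = c} :=
        Finset.sum_le_sum fun c _ => hge c
      _ = Fintype.card α := hcard.symm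


open Polynomial Finset in
lemma sum_up {α : Type*} [Fintype α] [Fintype {r : Setoid α // IsEvenPartition r}]
    (s : Setoid α) (hs : IsEvenPartition s) :
    ∑ r : {r : Setoid α // IsEvenPartition r}, (if s ≤ r.1 then fall (nBlocks r.1) else 0)
      = (X : Polynomial ℂ) ^ nBlocks s := by
  classical
  haveI : Fintype {x : {r : Setoid α // IsEvenPartition r} // s ≤ x.1} := Fintype.ofFinite _
  rw [← Finset.sum_filter]
  rw [Finset.sum_subtype (Finset.univ.filter fun r : {r : Setoid α // IsEvenPartition r} => s ≤ r.1)
    (p := fun r : {r : Setoid α // IsEvenPartition r} => s ≤ r.1) (fun x => by simp)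
    (fun r => fall (nBlocks r.1))]
  let E : {x : {r : Setoid α // IsEvenPartition r} // s ≤ x.1} ≃ {r : Setoid α // s ≤ r} :=
    { toFun := fun x => ⟨x.1.1, x.2⟩
      invFun := fun r => ⟨⟨r.1, isEven_of_le hs r.2⟩, r.2⟩
      left_inv := fun x => rfl
      right_inv := fun r => rfl }
  rw [show nBlocks s = Fintype.card (Quotient s) from Nat.card_eq_fintype_card, ← sum_fall]
  exact Fintype.sum_equiv (E.trans (upEquiv s)) _ _
    (fun x => by exact (congrArg fall (nBlocks_upEquiv s (E x))).symm)

end G2Aux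

open Polynomial Finset

theorem gram2_det_factorisation (m : ℕ) (hm : 1 ≤ m)
    (D : ℕ) (hD : D = ∑ t ∈ Finset.Icc 1 m, T m t) :
    (Gram2 m).det =
      Polynomial.X ^ D *
        ∏ k ∈ Finset.Icc 1 (m - 1),
          (Polynomial.X - Polynomial.C (k : ℂ)) ^ (D - ∑ t ∈ Finset.Icc 1 k, T m t) := by
  classical
  have hne : Nonempty (Fin (2 * m)) := ⟨⟨0, by omega⟩⟩
  set I := {s : Setoid (Fin (2 * m)) // IsEvenPartition s} with hIdef
  -- bounds on block numbers
  have hlow : ∀ r : I, 1 ≤ nBlocks r.1 := fun r => G2Aux.one_le_nBlocks r.1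
  have hup : ∀ r : I, nBlocks r.1 ≤ m := by
    intro r
    have := G2Aux.two_nBlocks_le r.2
    rw [Fintype.card_fin] at this
    omega
  -- the factorisation Γ = Z D Zᵀ
  let d : I → Polynomial ℂ := fun r => G2Aux.fall (nBlocks r.1)
  let Z : Matrix I I (Polynomial ℂ) := Matrix.of fun p r => if p.1 ≤ r.1 then 1 else 0
  have hfact : Gram2 m = Z * Matrix.diagonal d * Z.transpose := by
    refine Matrix.ext fun p q => ?_
    have lhs : (Z * Matrix.diagonal d * Z.transpose) p q = ∑ r : I, Z p r * d r * Z q r := by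
      rw [Matrix.mul_apply]
      exact Finset.sum_congr rfl fun r _ => by
        rw [Matrix.mul_diagonal, Matrix.transpose_apply]
    have hterm : ∀ r : I, Z p r * d r * Z q r
        = if p.1 ⊔ q.1 ≤ r.1 then G2Aux.fall (nBlocks r.1) else 0 := by
      intro r
      show (if p.1 ≤ r.1 then (1 : Polynomial ℂ) else 0) * d r * (if q.1 ≤ r.1 then 1 else 0) = _
      by_cases h1 : p.1 ≤ r.1 <;> by_cases h2 : q.1 ≤ r.1 <;>
        simp [h1, h2, sup_le_iff, d]
    rw [lhs]
    simp_rw [hterm]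
    exact (G2Aux.sum_up (p.1 ⊔ q.1) (G2Aux.isEven_of_le p.2 le_sup_left)).symm
  -- determinant of the triangular factors
  have mono : ∀ p r : I, p.1 ≤ r.1 → toLinearExtension p ≤ toLinearExtension r :=
    fun p r h => toLinearExtension.monotone h
  let eJ : I ≃ LinearExtension I := Equiv.refl I
  letI : Fintype (LinearExtension I) := (inferInstance : Fintype I)
  have hZdet : Z.det = 1 := by
    rw [← Matrix.det_reindex_self eJ Z]
    have htri : (Matrix.reindex eJ eJ Z).BlockTriangular id := by
      intro i j hij
      show (if (eJ.symm i).1 ≤ (eJ.symm j).1 then (1 : Polynomial ℂ) else 0) = 0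
      rw [if_neg]
      intro hle
      exact absurd (mono _ _ hle) (not_le.mpr hij)
    rw [Matrix.det_of_upperTriangular htri]
    have hdiag : ∀ i : LinearExtension I, (Matrix.reindex eJ eJ Z) i i = 1 := by
      intro i
      show (if (eJ.symm i).1 ≤ (eJ.symm i).1 then (1 : Polynomial ℂ) else 0) = 1
      rw [if_pos le_rfl]
    simp [hdiag]
  rw [hfact, Matrix.det_mul, Matrix.det_mul, Matrix.det_transpose, hZdet,
    Matrix.det_diagonal, one_mul, mul_one]
  -- now compute ∏ r : I, fall (nBlocks r.1)
  have hT : ∀ t, T m t = (Finset.univ.filter fun r : I => nBlocks r.1 = t).card := by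
    intro t
    rw [T, Nat.card_congr
      (Equiv.subtypeSubtypeEquivSubtypeInter IsEvenPartition fun s => nBlocks s = t).symm,
      Nat.card_eq_fintype_card, Fintype.card_subtype]
  have hDcard : D = Fintype.card I := by
    have hf : ∀ r : I, r ∈ Finset.univ → nBlocks r.1 ∈ Finset.Icc 1 m :=
      fun r _ => Finset.mem_Icc.mpr ⟨hlow r, hup r⟩
    rw [hD, ← Finset.card_univ, Finset.card_eq_sum_card_fiberwise hf]
    exact Finset.sum_congr rfl fun t _ => hT t
  have hIcc : ∀ k : ℕ, Finset.Icc 1 k = Finset.Ioc 0 k := fun k => by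
    ext x; simp [Nat.lt_iff_add_one_le]
  have hcnt : ∀ j, j ≤ m →
      (Finset.univ.filter fun r : I => j < nBlocks r.1).card
        = D - ∑ t ∈ Finset.Icc 1 j, T m t := by
    intro j hj
    have h1 : (Finset.univ.filter fun r : I => j < nBlocks r.1).card
        = ∑ t ∈ Finset.Ioc j m, T m t := by
      rw [Finset.card_eq_sum_card_fiberwise (f := fun r : I => nBlocks r.1)
        (t := Finset.Ioc j m)
        (fun r hr => Finset.mem_Ioc.mpr ⟨(Finset.mem_filter.mp hr).2, hup r⟩)]
      refine Finset.sum_congr rfl fun t ht => ?_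
      rw [Finset.filter_filter, hT t]
      congr 1
      ext r
      simp only [Finset.mem_filter, Finset.mem_univ, true_and]
      have := (Finset.mem_Ioc.mp ht).1
      constructor
      · rintro ⟨_, h2⟩; exact h2
      · intro h2; exact ⟨by omega, h2⟩
    have h2 : ∑ t ∈ Finset.Ioc 0 j, T m t + ∑ t ∈ Finset.Ioc j m, T m t
        = ∑ t ∈ Finset.Ioc 0 m, T m t :=
      Finset.sum_Ioc_consecutive _ (Nat.zero_le j) hj
    rw [hIcc] at hD ⊢
    rw [h1]
    omega
  have hfall : ∀ r : I, d r = ∏ j ∈ (Finset.range m).filter (· < nBlocks r.1), (X - C (j:ℂ)) := by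
    intro r
    have hfe : (Finset.range m).filter (· < nBlocks r.1) = Finset.range (nBlocks r.1) := by
      ext j
      simp only [Finset.mem_filter, Finset.mem_range]
      have := hup r
      constructor
      · rintro ⟨_, h⟩; exact h
      · intro h; exact ⟨by omega, h⟩
    rw [hfe]; rfl
  calc ∏ r : I, d r
      = ∏ r : I, ∏ j ∈ Finset.range m, (if j < nBlocks r.1 then (X - C (j:ℂ)) else 1) := by
        refine Finset.prod_congr rfl fun r _ => ?_
        rw [hfall r, Finset.prod_filter]
    _ = ∏ j ∈ Finset.range m, ∏ r : I, (if j < nBlocks r.1 then (X - C (j:ℂ)) else 1) :=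
        Finset.prod_comm
    _ = ∏ j ∈ Finset.range m,
          (X - C (j:ℂ)) ^ (Finset.univ.filter fun r : I => j < nBlocks r.1).card := by
        refine Finset.prod_congr rfl fun j _ => ?_
        rw [← Finset.prod_filter, Finset.prod_const]
    _ = X ^ D * ∏ k ∈ Finset.Icc 1 (m - 1),
          (X - C (k:ℂ)) ^ (D - ∑ t ∈ Finset.Icc 1 k, T m t) := by
        rw [Finset.range_eq_Ico, Finset.prod_eq_prod_Ico_succ_bot (by omega : 0 < m)]
        congr 1
        · rw [hcnt 0 (by omega)]
          simp
        · have hIm : Finset.Ico 1 m = Finset.Icc 1 (m-1) := by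
            ext x; simp only [Finset.mem_Ico, Finset.mem_Icc]; omega
          rw [hIm]
          refine Finset.prod_congr rfl fun k hk => ?_
          rw [hcnt k (by have := (Finset.mem_Icc.mp hk).2; omega)]

end
end

section
/- For m ≥ 1, the polynomial det Γ²_{2m} ∈ ℂ[δ] has degree Σ_{t=1}^{m} t·T(m,t). -/
open scoped Classical

noncomputable section

lemma nBlocks_anti {X : Type*} [Finite X] {s t : Setoid X} (h : s ≤ t) :
    nBlocks t ≤ nBlocks s := by
  apply Nat.card_le_card_of_surjective (Quotient.map' (s₁ := s) (s₂ := t) id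
    (fun a b hab => h hab))
  intro q
  induction q using Quotient.inductionOn' with
  | h a => exact ⟨Quotient.mk'' a, rfl⟩

lemma eq_of_le_of_nBlocks_le {X : Type*} [Finite X] {s t : Setoid X} (h : s ≤ t)
    (hc : nBlocks s ≤ nBlocks t) : s = t := by
  have := Fintype.ofFinite X
  have := Fintype.ofFinite (Quotient s)
  have := Fintype.ofFinite (Quotient t)
  set f : Quotient s → Quotient t := Quotient.map' id (fun a b hab => h hab) with hf
  have hsurj : Function.Surjective f := by
    intro q
    induction q using Quotient.inductionOn' with
    | h a => exact ⟨Quotient.mk'' a, rfl⟩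
  have hcard : Fintype.card (Quotient t) = Fintype.card (Quotient s) := by
    have h1 := Fintype.card_le_of_surjective f hsurj
    have h2 : Fintype.card (Quotient s) ≤ Fintype.card (Quotient t) := by
      simpa [nBlocks, Nat.card_eq_fintype_card] using hc
    omega
  have hinj : Function.Injective f :=
    ((Fintype.bijective_iff_surjective_and_card f).2 ⟨hsurj, hcard.symm⟩).1
  refine le_antisymm h ?_
  intro x y hxy
  have : f (Quotient.mk'' x) = f (Quotient.mk'' y) := by
    simp only [hf, Quotient.map'_mk'', id]
    exact Quotient.sound' hxy
  exact Quotient.exact' (hinj this)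

lemma two_mul_nBlocks_le {X : Type*} [Fintype X] {s : Setoid X} (h : IsEvenPartition s) :
    2 * nBlocks s ≤ Fintype.card X := by
  have := Fintype.ofFinite (Quotient s)
  have hcard : Fintype.card X = ∑ q : Quotient s,
      (Finset.univ.filter (fun x : X => Quotient.mk'' x = q)).card :=
    Finset.card_eq_sum_card_fiberwise (fun x _ => Finset.mem_univ _)
  have hfib : ∀ q : Quotient s,
      2 ≤ (Finset.univ.filter (fun x : X => Quotient.mk'' x = q)).card := by
    intro q
    induction q using Quotient.inductionOn' with
    | h a =>
      have heq : (Finset.univ.filter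
            (fun x : X => Quotient.mk'' x = (Quotient.mk'' a : Quotient s))).card
          = Nat.card {y : X // s.r a y} := by
        rw [Nat.card_eq_fintype_card, Fintype.card_subtype]
        congr 1
        ext x
        simp only [Finset.mem_filter, Finset.mem_univ, true_and]
        constructor
        · intro hx; exact Setoid.symm' s (Quotient.exact' hx)
        · intro hx; exact Quotient.sound' (Setoid.symm' s hx)
      rw [heq]
      have hpos : 0 < Nat.card {y : X // s.r a y} := by
        have : Nonempty {y : X // s.r a y} := ⟨⟨a, Setoid.refl' s a⟩⟩
        exact Nat.card_pos
      rcases h a with ⟨k, hk⟩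
      omega
  calc 2 * nBlocks s = ∑ _q : Quotient s, 2 := by
        rw [Finset.sum_const, smul_eq_mul, mul_comm, nBlocks, Nat.card_eq_fintype_card,
          Fintype.card]
    _ ≤ _ := hcard ▸ Finset.sum_le_sum (fun q _ => hfib q)

theorem gram2_det_degree (m : ℕ) (hm : 1 ≤ m) :
    (Gram2 m).det.degree = ((∑ t ∈ Finset.Icc 1 m, t * T m t : ℕ) : WithBot ℕ) := by
  set ι := {s : Setoid (Fin (2 * m)) // IsEvenPartition s} with hι
  set N : ℕ := ∑ p : ι, nBlocks p.1 with hN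
  -- the exponent sum of a permutation term
  set f : Equiv.Perm ι → ℕ := fun σ => ∑ p : ι, nBlocks ((σ p).1 ⊔ p.1) with hfdef
  have hterm : ∀ p : ι, ∀ σ : Equiv.Perm ι, nBlocks ((σ p).1 ⊔ p.1) ≤ nBlocks (σ p).1 :=
    fun p σ => nBlocks_anti le_sup_left
  have hsumN : ∀ σ : Equiv.Perm ι, ∑ p : ι, nBlocks (σ p).1 = N :=
    fun σ => Equiv.sum_comp σ (fun p => nBlocks p.1)
  have hfle : ∀ σ : Equiv.Perm ι, f σ ≤ N := by
    intro σ
    rw [← hsumN σ]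
    exact Finset.sum_le_sum (fun p _ => hterm p σ)
  have hf1 : f 1 = N := by
    simp [hfdef, hN]
  have hflt : ∀ σ : Equiv.Perm ι, σ ≠ 1 → f σ < N := by
    intro σ hσ
    rcases lt_or_eq_of_le (hfle σ) with h | h
    · exact h
    exfalso
    apply hσ
    have heq1 : ∀ p : ι, nBlocks ((σ p).1 ⊔ p.1) = nBlocks (σ p).1 := by
      have := (Finset.sum_eq_sum_iff_of_le
        (f := fun p : ι => nBlocks ((σ p).1 ⊔ p.1)) (g := fun p : ι => nBlocks (σ p).1)
        (s := Finset.univ) (fun p _ => hterm p σ)).1 (h.trans (hsumN σ).symm)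
      exact fun p => this p (Finset.mem_univ p)
    have hle : ∀ p : ι, p.1 ≤ (σ p).1 := by
      intro p
      have := eq_of_le_of_nBlocks_le (le_sup_left : (σ p).1 ≤ (σ p).1 ⊔ p.1)
        (le_of_eq (heq1 p).symm)
      calc p.1 ≤ (σ p).1 ⊔ p.1 := le_sup_right
        _ = (σ p).1 := this.symm
    have heq2 : ∀ p : ι, nBlocks (σ p).1 = nBlocks p.1 := by
      have := (Finset.sum_eq_sum_iff_of_le
        (f := fun p : ι => nBlocks (σ p).1) (g := fun p : ι => nBlocks p.1)
        (s := Finset.univ) (fun p _ => nBlocks_anti (hle p))).1 (by rw [hsumN σ, hN])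
      exact fun p => this p (Finset.mem_univ p)
    ext p : 1
    exact (Subtype.ext (eq_of_le_of_nBlocks_le (hle p) (le_of_eq (heq2 p).symm))).symm
  -- compute the determinant degree
  have hdet : (Gram2 m).det = (Polynomial.X : Polynomial ℂ) ^ N
      + ∑ σ ∈ (Finset.univ : Finset (Equiv.Perm ι)).erase 1,
          Equiv.Perm.sign σ • (Polynomial.X : Polynomial ℂ) ^ f σ := by
    rw [Matrix.det_apply]
    rw [← Finset.add_sum_erase _ _ (Finset.mem_univ (1 : Equiv.Perm ι))]
    congr 1
    · simp [Gram2, Finset.prod_pow_eq_pow_sum, hf1, hfdef]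
      convert rfl
    · refine Finset.sum_congr rfl (fun σ _ => ?_)
      congr 1
      simp [Gram2, Finset.prod_pow_eq_pow_sum, hfdef]
      convert rfl
  have hdeg : (Gram2 m).det.degree = (N : WithBot ℕ) := by
    rw [hdet]
    rw [Polynomial.degree_add_eq_left_of_degree_lt, Polynomial.degree_X_pow]
    rw [Polynomial.degree_X_pow]
    refine lt_of_le_of_lt (Polynomial.degree_sum_le _ _) ?_
    rw [Finset.sup_lt_iff (by exact_mod_cast bot_lt_iff_ne_bot.2 (by simp))]
    intro σ hσ
    have hσ1 : σ ≠ 1 := (Finset.mem_erase.1 hσ).1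
    calc (Equiv.Perm.sign σ • (Polynomial.X : Polynomial ℂ) ^ f σ).degree
        ≤ ((Polynomial.X : Polynomial ℂ) ^ f σ).degree := by
          rcases Int.units_eq_one_or (Equiv.Perm.sign σ) with h | h <;>
            simp [h, Polynomial.degree_neg]
      _ = (f σ : WithBot ℕ) := Polynomial.degree_X_pow _
      _ < (N : WithBot ℕ) := by exact_mod_cast hflt σ hσ1
  rw [hdeg]
  congr 1
  show ∑ p : ι, nBlocks p.1 = ∑ t ∈ Finset.Icc 1 m, t * T m t
  have hmem : ∀ p : ι, nBlocks p.1 ∈ Finset.Icc 1 m := by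
    intro p
    rw [Finset.mem_Icc]
    constructor
    · have : Nonempty (Fin (2 * m)) := ⟨⟨0, by omega⟩⟩
      have : Nonempty (Quotient p.1) := Nonempty.map (Quotient.mk'' ) this
      exact Nat.card_pos
    · have := two_mul_nBlocks_le (X := Fin (2 * m)) p.2
      rw [Fintype.card_fin] at this
      omega
  rw [← Finset.sum_fiberwise_of_maps_to (fun p _ => hmem p) (fun p : ι => nBlocks p.1)]
  refine Finset.sum_congr rfl (fun t ht => ?_)
  have hT : T m t = (Finset.univ.filter (fun p : ι => nBlocks p.1 = t)).card := by
    rw [T, Nat.card_congr (Equiv.subtypeSubtypeEquivSubtypeInter _ _).symm,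
      Nat.card_eq_fintype_card, Fintype.card_subtype]
  rw [Finset.sum_congr rfl (fun p hp => (Finset.mem_filter.1 hp).2), Finset.sum_const,
    smul_eq_mul, hT, mul_comm]

end
end

section
/- For n ≥ 1, in the polynomial ring ℂ[δ], det Γ_n = δ^{B(n)} · ∏_{k=1}^{n−1} (δ − k)^{Σ_{l=k+1}^{n} S(n,l)}. -/
/- Set partitions of a finite set are modelled as equivalence relations (`Setoid`);
   `nBlocks` is the number of blocks (equivalence classes), `p ⊔ q` is the join.
   `S n l` is the Stirling number of the second kind, `B n` the Bell number, and
   `Gram n` is the Gram matrix of the spine standard module of the partition algebra,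
   over `ℂ[δ]` (with `δ = Polynomial.X`). -/

open scoped Classical

noncomputable section

def S (n l : ℕ) : ℕ := Nat.card {s : Setoid (Fin n) // nBlocks s = l}

def B (n : ℕ) : ℕ := ∑ l ∈ Finset.Icc 1 n, S n l

noncomputable instance (n : ℕ) : Fintype (Setoid (Fin n)) :=
  Fintype.ofFinite _

def Gram (n : ℕ) : Matrix (Setoid (Fin n)) (Setoid (Fin n)) (Polynomial ℂ) :=
  Matrix.of fun p q => (Polynomial.X : Polynomial ℂ) ^ nBlocks (p ⊔ q)

/-! ### Auxiliary material -/

section Aux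

open Finset Polynomial

/-- The falling factorial polynomial `δ(δ-1)⋯(δ-k+1)`. -/
noncomputable def ffp (k : ℕ) : Polynomial ℂ :=
  ∏ j ∈ Finset.range k, (Polynomial.X - Polynomial.C (j : ℂ))

lemma ffp_eval (m k : ℕ) : (ffp k).eval (m : ℂ) = (m.descFactorial k : ℂ) := by
  induction k with
  | zero => simp [ffp]
  | succ k ih =>
    rw [ffp, Finset.prod_range_succ, ← ffp, eval_mul, ih, Nat.descFactorial_succ,
      eval_sub, eval_X, eval_C]
    rcases le_or_gt k m with h | h
    · push_cast [h]
      ring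
    · rw [Nat.descFactorial_eq_zero_iff_lt.2 h, Nat.sub_eq_zero_of_le h.le]
      simp

variable {α : Type*} [Fintype α]

noncomputable instance (s : Setoid α) : Fintype (Quotient s) := Fintype.ofFinite _

lemma nBlocks_eq_card (s : Setoid α) : nBlocks s = Fintype.card (Quotient s) :=
  Nat.card_eq_fintype_card

lemma nBlocks_pos [Nonempty α] (s : Setoid α) : 1 ≤ nBlocks s := by
  rw [nBlocks_eq_card]
  have : Nonempty (Quotient s) := ⟨Quotient.mk s (Classical.arbitrary α)⟩
  exact Fintype.card_pos

lemma nBlocks_le (s : Setoid α) : nBlocks s ≤ Fintype.card α := by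
  rw [nBlocks_eq_card]
  exact Fintype.card_le_of_surjective (Quotient.mk s) Quotient.mk_surjective

/-- The fiber equivalence: functions on `Quotient t` with kernel `r` correspond to
embeddings of `Quotient r`. -/
noncomputable def fiberEquiv (t r : Setoid α) (htr : t ≤ r) (m : ℕ) :
    {f : Quotient t → Fin m // Setoid.ker (f ∘ Quotient.mk t) = r} ≃ (Quotient r ↪ Fin m) where
  toFun := fun ⟨f, hf⟩ =>
    ⟨Quotient.lift (fun a => f (Quotient.mk t a))
      (fun a b hab => by
        have : Setoid.ker (f ∘ Quotient.mk t) a b := hf ▸ hab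
        exact this),
     by
      intro x y
      induction x using Quotient.ind
      induction y using Quotient.ind
      intro hxy
      refine Quotient.sound ?_
      rw [← hf]
      exact hxy⟩
  invFun := fun g =>
    ⟨fun x => Quotient.lift (fun a => g (Quotient.mk r a))
        (fun a b hab => show g (Quotient.mk r a) = g (Quotient.mk r b) by
          rw [Quotient.sound (htr hab)]) x,
     by
      refine Setoid.ext fun a b => ?_
      constructor
      · intro hab
        have : g (Quotient.mk r a) = g (Quotient.mk r b) := hab
        exact Quotient.exact (g.injective this)
      · intro hab
        show g (Quotient.mk r a) = g (Quotient.mk r b)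
        rw [Quotient.sound hab]⟩
  left_inv := fun ⟨f, hf⟩ => by
    refine Subtype.ext (funext fun x => ?_)
    induction x using Quotient.ind
    rfl
  right_inv := fun g => by
    refine Function.Embedding.ext fun x => ?_
    induction x using Quotient.ind
    rfl

/-- For a natural number `m`, `m^{b(t)}` counts functions on the blocks of `t`, refined by the
kernel partition. -/
lemma count_lemma [Fintype (Setoid α)] (t : Setoid α) (m : ℕ) :
    m ^ nBlocks t = ∑ r ∈ Finset.univ.filter (fun r : Setoid α => t ≤ r),
      Nat.descFactorial m (nBlocks r) := by
  have lhs : m ^ nBlocks t = Fintype.card (Quotient t → Fin m) := by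
    rw [Fintype.card_fun, Fintype.card_fin, nBlocks_eq_card]
  rw [lhs, Finset.sum_filter]
  have key : Fintype.card (Quotient t → Fin m) =
      ∑ r : Setoid α, (Finset.univ.filter
        (fun f : Quotient t → Fin m => Setoid.ker (f ∘ Quotient.mk t) = r)).card :=
    Finset.card_eq_sum_card_fiberwise (fun f _ => Finset.mem_univ _)
  rw [key]
  refine Finset.sum_congr rfl fun r _ => ?_
  by_cases htr : t ≤ r
  · rw [if_pos htr, ← Fintype.card_subtype,
      Fintype.card_congr (fiberEquiv t r htr m), Fintype.card_embedding_eq,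
      Fintype.card_fin, nBlocks_eq_card]
  · rw [if_neg htr, Finset.card_eq_zero, Finset.filter_eq_empty_iff]
    intro f _ hf
    refine htr ?_
    rw [← hf]
    intro a b hab
    show f (Quotient.mk t a) = f (Quotient.mk t b)
    rw [Quotient.sound hab]

/-- The key polynomial identity: `δ^{b(t)} = ∑_{r ≥ t} (δ)_{b(r)}`. -/
lemma poly_lemma [Fintype (Setoid α)] (t : Setoid α) :
    (Polynomial.X : Polynomial ℂ) ^ nBlocks t =
      ∑ r ∈ Finset.univ.filter (fun r : Setoid α => t ≤ r), ffp (nBlocks r) := by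
  apply Polynomial.eq_of_infinite_eval_eq
  apply Set.Infinite.mono (s := Set.range (Nat.cast : ℕ → ℂ))
  · rintro _ ⟨m, rfl⟩
    simp only [Set.mem_setOf_eq, Polynomial.eval_pow, Polynomial.eval_X,
      Polynomial.eval_finset_sum]
    calc ((m : ℂ)) ^ nBlocks t = ((m ^ nBlocks t : ℕ) : ℂ) := by push_cast; ring
    _ = _ := by
      rw [count_lemma t m]
      push_cast
      exact Finset.sum_congr rfl fun r _ => (ffp_eval m (nBlocks r)).symm
  · exact Set.infinite_range_of_injective Nat.cast_injective

end Aux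

/-! ### The zeta matrix of a finite partial order has determinant 1 -/

section ZMat

open Matrix

variable {α : Type*} [Fintype α] [PartialOrder α]

noncomputable instance : Fintype (LinearExtension α) := inferInstanceAs (Fintype α)

/-- The zeta matrix of a partial order. -/
noncomputable def zmat : Matrix α α (Polynomial ℂ) :=
  Matrix.of fun p r => if p ≤ r then 1 else 0

lemma zmat_det : (zmat : Matrix α α (Polynomial ℂ)).det = 1 := by
  set e : LinearExtension α ≃ α := Equiv.cast rfl with he
  rw [← Matrix.det_submatrix_equiv_self e]
  have htri : ((zmat : Matrix α α (Polynomial ℂ)).submatrix e e).BlockTriangular id := by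
    intro i j hij
    show (if e i ≤ e j then (1 : Polynomial ℂ) else 0) = 0
    rw [if_neg]
    intro hle
    have := toLinearExtension.monotone' (α := α) hle
    exact absurd this (not_le.2 hij)
  rw [Matrix.det_of_upperTriangular htri]
  refine Finset.prod_eq_one fun i _ => ?_
  show (if e i ≤ e i then (1 : Polynomial ℂ) else 0) = 1
  rw [if_pos le_rfl]

end ZMat

/-! ### Regrouping the product of falling factorials -/

section Regroup

open Finset Polynomial

lemma S_eq (n l : ℕ) :
    S n l = (Finset.univ.filter (fun r : Setoid (Fin n) => nBlocks r = l)).card := by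
  rw [S, Nat.card_eq_fintype_card, Fintype.card_subtype]

lemma card_filter_lt (n k : ℕ) :
    (Finset.univ.filter (fun r : Setoid (Fin n) => k < nBlocks r)).card =
      ∑ l ∈ Finset.Icc (k + 1) n, S n l := by
  rw [Finset.card_eq_sum_card_fiberwise
    (f := fun r : Setoid (Fin n) => nBlocks r) (t := Finset.Icc (k + 1) n)
    (fun r hr => by
      simp only [Finset.mem_coe, Finset.mem_filter] at hr
      exact Finset.mem_Icc.2 ⟨hr.2, by simpa using nBlocks_le r⟩)]
  refine Finset.sum_congr rfl fun l hl => ?_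
  rw [S_eq]
  congr 1
  rw [Finset.filter_filter]
  refine Finset.filter_congr fun r _ => ?_
  have hl' := Finset.mem_Icc.1 hl
  constructor
  · exact fun h => h.2
  · exact fun h => ⟨by omega, h⟩

lemma B_eq (n : ℕ) (hn : 1 ≤ n) : B n = Fintype.card (Setoid (Fin n)) := by
  have : Nonempty (Fin n) := ⟨⟨0, hn⟩⟩
  rw [B, Fintype.card, Finset.card_eq_sum_card_fiberwise
    (f := fun r : Setoid (Fin n) => nBlocks r) (t := Finset.Icc 1 n)
    (fun r _ => Finset.mem_Icc.2 ⟨nBlocks_pos r, by simpa using nBlocks_le r⟩)]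
  refine Finset.sum_congr rfl fun l _ => ?_
  rw [S_eq]

lemma regroup (n : ℕ) (hn : 1 ≤ n) :
    ∏ r : Setoid (Fin n), ffp (nBlocks r) =
      Polynomial.X ^ B n * ∏ k ∈ Finset.Icc 1 (n - 1),
        (Polynomial.X - Polynomial.C (k : ℂ)) ^ (∑ l ∈ Finset.Icc (k + 1) n, S n l) := by
  have : Nonempty (Fin n) := ⟨⟨0, hn⟩⟩
  have step1 : ∀ r : Setoid (Fin n), ffp (nBlocks r) =
      ∏ j ∈ Finset.range n,
        (if j < nBlocks r then Polynomial.X - Polynomial.C (j : ℂ) else 1) := by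
    intro r
    rw [ffp, ← Finset.prod_filter]
    congr 1
    refine Finset.ext fun j => ?_
    simp only [Finset.mem_filter, Finset.mem_range]
    have : nBlocks r ≤ n := by simpa using nBlocks_le r
    omega
  calc ∏ r : Setoid (Fin n), ffp (nBlocks r)
      = ∏ r : Setoid (Fin n), ∏ j ∈ Finset.range n,
          (if j < nBlocks r then Polynomial.X - Polynomial.C (j : ℂ) else 1) :=
        Finset.prod_congr rfl fun r _ => step1 r
    _ = ∏ j ∈ Finset.range n, ∏ r : Setoid (Fin n),
          (if j < nBlocks r then Polynomial.X - Polynomial.C (j : ℂ) else 1) :=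
        Finset.prod_comm
    _ = ∏ j ∈ Finset.range n, (Polynomial.X - Polynomial.C (j : ℂ)) ^
          (Finset.univ.filter (fun r : Setoid (Fin n) => j < nBlocks r)).card := by
        refine Finset.prod_congr rfl fun j _ => ?_
        rw [← Finset.prod_filter, Finset.prod_const]
    _ = _ := by
        have hins : Finset.range n = insert 0 (Finset.Ico 1 n) := by
          refine Finset.ext fun j => ?_
          simp only [Finset.mem_range, Finset.mem_insert, Finset.mem_Ico]
          omega
        rw [hins, Finset.prod_insert (by simp)]
        congr 1
        · rw [Nat.cast_zero, Polynomial.C_0, sub_zero]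
          congr 1
          rw [B_eq n hn, Fintype.card]
          congr 1
          exact Finset.filter_true_of_mem fun r _ => nBlocks_pos r
        · have hico : Finset.Ico 1 n = Finset.Icc 1 (n - 1) := by
            refine Finset.ext fun j => ?_
            simp only [Finset.mem_Ico, Finset.mem_Icc]
            omega
          rw [hico]
          exact Finset.prod_congr rfl fun k _ => by rw [card_filter_lt n k]

end Regroup

/-! ### The factorisation of the Gram matrix and its determinant -/

section Main

open Matrix Polynomial

lemma gram_factor (n : ℕ) :
    Gram n = zmat * Matrix.diagonal (fun r : Setoid (Fin n) => ffp (nBlocks r)) * zmatᵀ := by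
  set Z : Matrix (Setoid (Fin n)) (Setoid (Fin n)) (Polynomial ℂ) := zmat with hZ
  show Gram n = Z * Matrix.diagonal (fun r : Setoid (Fin n) => ffp (nBlocks r)) * Zᵀ
  refine Matrix.ext fun p q => ?_
  rw [Matrix.mul_apply]
  have : ∀ r : Setoid (Fin n),
      (Z * Matrix.diagonal (fun r : Setoid (Fin n) => ffp (nBlocks r))) p r *
        Zᵀ r q =
      if p ⊔ q ≤ r then ffp (nBlocks r) else 0 := by
    intro r
    rw [Matrix.mul_diagonal, Matrix.transpose_apply]
    show (if p ≤ r then (1 : Polynomial ℂ) else 0) * ffp (nBlocks r) *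
        (if q ≤ r then (1 : Polynomial ℂ) else 0) = _
    by_cases hp : p ≤ r <;> by_cases hq : q ≤ r <;>
      simp [hp, hq, sup_le_iff]
  rw [Finset.sum_congr rfl fun r _ => this r, ← Finset.sum_filter]
  show (Polynomial.X : Polynomial ℂ) ^ nBlocks (p ⊔ q) = _
  convert (poly_lemma (p ⊔ q)).symm using 2
  · exact poly_lemma (p ⊔ q)
  · exact (poly_lemma (p ⊔ q)).symm

theorem gram_det_factorisation (n : ℕ) (hn : 1 ≤ n) :
    (Gram n).det =
      Polynomial.X ^ B n *
        ∏ k ∈ Finset.Icc 1 (n - 1),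
          (Polynomial.X - Polynomial.C (k : ℂ)) ^ (∑ l ∈ Finset.Icc (k + 1) n, S n l) := by
  rw [gram_factor n, Matrix.det_mul, Matrix.det_mul, zmat_det, Matrix.det_transpose,
    zmat_det, one_mul, mul_one, Matrix.det_diagonal]
  exact regroup n hn

end Main

end
end

section
/- Let n ≥ 1 and δ_c ∈ ℂ. The complex matrix obtained from Γ_n by evaluating δ at δ_c is invertible if and only if δ_c ∉ {0, 1, …, n−1}. -/
/- Set partitions of a finite set are modelled as equivalence relations (`Setoid`);
   `nBlocks` is the number of blocks (equivalence classes), `p ⊔ q` is the join.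
   `S n l` is the Stirling number of the second kind, `B n` the Bell number, and
   `Gram n` is the Gram matrix of the spine standard module of the partition algebra,
   over `ℂ[δ]` (with `δ = Polynomial.X`). -/

open scoped Classical

noncomputable section

namespace GramAux

variable {X W : Type*}

/-- quotient map between quotients of comparable setoids -/
def qmap {p r : Setoid X} (h : p ≤ r) : Quotient p → Quotient r :=
  fun x => Quotient.liftOn x (fun a => Quotient.mk r a) (fun _ _ hab => Quotient.sound (h hab))

lemma qmap_mk {p r : Setoid X} (h : p ≤ r) (a : X) :
    qmap h (Quotient.mk p a) = Quotient.mk r a := rfl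

lemma qmap_surjective {p r : Setoid X} (h : p ≤ r) : Function.Surjective (qmap h) := by
  intro y
  induction y using Quotient.ind with
  | _ a => exact ⟨Quotient.mk p a, rfl⟩

lemma nBlocks_le_of_le [Fintype X] {p r : Setoid X} (h : p ≤ r) : nBlocks r ≤ nBlocks p :=
  Nat.card_le_card_of_surjective _ (qmap_surjective h)

lemma eq_of_le_of_nBlocks [Fintype X] {p r : Setoid X} (h : p ≤ r)
    (hb : nBlocks r = nBlocks p) : p = r := by
  have hcard : Fintype.card (Quotient p) = Fintype.card (Quotient r) := by
    have := hb
    simpa [nBlocks, Nat.card_eq_fintype_card] using this.symm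
  have hbij : Function.Bijective (qmap h) :=
    (Fintype.bijective_iff_surjective_and_card _).mpr ⟨qmap_surjective h, hcard⟩
  refine le_antisymm h (fun x y hxy => ?_)
  have : qmap h (Quotient.mk p x) = qmap h (Quotient.mk p y) := by
    rw [qmap_mk, qmap_mk]; exact Quotient.sound hxy
  exact Quotient.exact (hbij.injective this)

lemma nBlocks_bot [Fintype X] : nBlocks (⊥ : Setoid X) = Nat.card X := by
  refine (Nat.card_eq_of_bijective (Quotient.mk ⊥) ⟨fun a b hab => ?_, fun y => ?_⟩).symm
  · have h2 : (⊥ : Setoid X) a b := Quotient.exact hab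
    simpa [Setoid.bot_def] using h2
  · induction y using Quotient.ind with
    | _ a => exact ⟨a, rfl⟩

/-- functions constant on blocks of `t` correspond to functions on the quotient -/
def liftEquiv (t : Setoid X) : (Quotient t → W) ≃ {f : X → W // t ≤ Setoid.ker f} where
  toFun g := ⟨fun x => g (Quotient.mk t x), fun {a b} hab => congrArg g (Quotient.sound hab)⟩
  invFun f := Quotient.lift f.1 (fun a b hab => f.2 hab)
  left_inv g := by
    funext x
    induction x using Quotient.ind with
    | _ a => rfl
  right_inv f := by ext x; rfl

/-- functions with kernel exactly `s` correspond to embeddings of the quotient -/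
def kerFiberEquiv (s : Setoid X) :
    {f : X → W // Setoid.ker f = s} ≃ (Quotient s ↪ W) where
  toFun f := ⟨Quotient.lift f.1 (fun a b hab => by
      have : Setoid.ker f.1 a b := by rw [f.2]; exact hab
      exact this), by
    intro x y
    induction x using Quotient.ind with
    | _ a =>
      induction y using Quotient.ind with
      | _ b =>
        intro hfe
        refine Quotient.sound ?_
        have : Setoid.ker f.1 a b := hfe
        rw [f.2] at this
        exact this⟩
  invFun g := ⟨fun x => g (Quotient.mk s x), by
    ext a b
    rw [Setoid.ker_def]
    constructor
    · intro h
      exact Quotient.exact (g.injective h)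
    · intro h
      exact congrArg g (Quotient.sound h)⟩
  left_inv f := by ext x; rfl
  right_inv g := by
    ext x
    induction x using Quotient.ind with
    | _ a => rfl

lemma count [Fintype X] [Fintype (Setoid X)] (t : Setoid X) (m : ℕ) :
    m ^ nBlocks t =
      ∑ r ∈ Finset.univ.filter (fun r : Setoid X => t ≤ r), Nat.descFactorial m (nBlocks r) := by
  classical
  have h1 : (Finset.univ.filter (fun f : X → Fin m => t ≤ Setoid.ker f)).card = m ^ nBlocks t := by
    rw [← Fintype.card_subtype]
    rw [Fintype.card_congr (liftEquiv (W := Fin m) t).symm]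
    rw [Fintype.card_fun, Fintype.card_fin]
    rw [nBlocks, Nat.card_eq_fintype_card]
  have h2 := Finset.card_eq_sum_card_fiberwise
    (s := Finset.univ.filter (fun f : X → Fin m => t ≤ Setoid.ker f))
    (t := Finset.univ.filter (fun r : Setoid X => t ≤ r))
    (f := fun f => Setoid.ker f)
    (fun f hf => by
      simp only [Finset.mem_coe, Finset.mem_filter, Finset.mem_univ, true_and] at hf ⊢
      exact hf)
  rw [h1] at h2
  rw [h2]
  refine Finset.sum_congr rfl (fun r hr => ?_)
  simp only [Finset.mem_filter, Finset.mem_univ, true_and] at hr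
  rw [Finset.filter_filter]
  have hpred : ∀ f : X → Fin m, (t ≤ Setoid.ker f ∧ Setoid.ker f = r) ↔ Setoid.ker f = r := by
    intro f
    constructor
    · exact fun h => h.2
    · intro h; exact ⟨h ▸ hr, h⟩
  rw [Finset.filter_congr (fun f _ => hpred f)]
  rw [← Fintype.card_subtype]
  rw [Fintype.card_congr (kerFiberEquiv (W := Fin m) r)]
  rw [Fintype.card_embedding_eq, Fintype.card_fin, nBlocks, Nat.card_eq_fintype_card]

lemma castDesc (m j : ℕ) :
    ((Nat.descFactorial m j : ℕ) : ℂ) = ∏ k ∈ Finset.range j, ((m : ℂ) - k) := by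
  induction j with
  | zero => simp
  | succ j ih =>
    rw [Finset.prod_range_succ, ← ih, Nat.descFactorial_succ]
    by_cases h : j ≤ m
    · push_cast [Nat.cast_sub h]
      ring
    · have hz : Nat.descFactorial m j = 0 :=
        Nat.descFactorial_eq_zero_iff_lt.mpr (lt_of_not_ge h)
      simp [hz]

lemma keyC [Fintype X] [Fintype (Setoid X)] (t : Setoid X) (x : ℂ) :
    x ^ nBlocks t = ∑ r ∈ Finset.univ.filter (fun r : Setoid X => t ≤ r),
      ∏ k ∈ Finset.range (nBlocks r), (x - k) := by
  set P : Polynomial ℂ :=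
    Polynomial.X ^ nBlocks t - ∑ r ∈ Finset.univ.filter (fun r : Setoid X => t ≤ r),
      ∏ k ∈ Finset.range (nBlocks r), (Polynomial.X - Polynomial.C (k : ℂ)) with hP
  have hroot : ∀ m : ℕ, P.IsRoot (m : ℂ) := by
    intro m
    have hm := count t m
    simp only [Polynomial.IsRoot, hP, Polynomial.eval_sub, Polynomial.eval_pow,
      Polynomial.eval_X, Polynomial.eval_finset_sum, Polynomial.eval_prod,
      Polynomial.eval_C, sub_eq_zero]
    calc (m : ℂ) ^ nBlocks t
        = ((m ^ nBlocks t : ℕ) : ℂ) := by push_cast; ring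
      _ = _ := by
          rw [hm]
          push_cast
          refine Finset.sum_congr rfl (fun r _ => ?_)
          exact castDesc m (nBlocks r)
  have hPzero : P = 0 := by
    refine Polynomial.eq_zero_of_infinite_isRoot P ?_
    exact Set.infinite_of_injective_forall_mem
      (f := fun m : ℕ => (m : ℂ)) (fun a b h => Nat.cast_injective h) (fun m => hroot m)
  have := congrArg (Polynomial.eval x) hPzero
  simp only [hP, Polynomial.eval_sub, Polynomial.eval_pow, Polynomial.eval_X,
    Polynomial.eval_finset_sum, Polynomial.eval_prod, Polynomial.eval_C,
    Polynomial.eval_zero, sub_eq_zero] at this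
  exact this

end GramAux

theorem gram_eval_isUnit_iff (n : ℕ) (hn : 1 ≤ n) (δc : ℂ) :
    IsUnit ((Gram n).map (Polynomial.eval δc)) ↔ ∀ k : ℕ, k < n → δc ≠ (k : ℂ) := by
  classical
  set d : Setoid (Fin n) → ℂ := fun r => ∏ k ∈ Finset.range (nBlocks r), (δc - k) with hd
  set Z : Matrix (Setoid (Fin n)) (Setoid (Fin n)) ℂ :=
    Matrix.of (fun p r => if p ≤ r then 1 else 0) with hZ
  have hZapp : ∀ p r, Z p r = if p ≤ r then 1 else 0 := fun p r => rfl
  -- factorization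
  have hfact : (Gram n).map (Polynomial.eval δc) = Z * Matrix.diagonal d * Z.transpose := by
    ext p q
    rw [Matrix.map_apply, Matrix.mul_apply]
    simp only [Matrix.mul_diagonal, Matrix.transpose_apply, hZapp]
    have hterm : ∀ r : Setoid (Fin n),
        (if p ≤ r then (1:ℂ) else 0) * d r * (if q ≤ r then (1:ℂ) else 0)
          = if p ⊔ q ≤ r then d r else 0 := by
      intro r
      by_cases h1 : p ≤ r <;> by_cases h2 : q ≤ r <;>
        simp [h1, h2, sup_le_iff]
    rw [Finset.sum_congr rfl (fun r _ => hterm r)]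
    rw [← Finset.sum_filter]
    have := GramAux.keyC (p ⊔ q) δc
    simp only [Gram, Matrix.of_apply, Polynomial.eval_pow, Polynomial.eval_X]
    rw [this]
  -- determinant of Z is 1
  have hbtZ : Z.BlockTriangular (fun r => OrderDual.toDual (nBlocks r)) := by
    intro p r h
    rw [hZapp, if_neg]
    intro hle
    exact absurd (GramAux.nBlocks_le_of_le hle) (not_le.mpr h)
  have hblocks : ∀ a, Z.toSquareBlock (fun r => OrderDual.toDual (nBlocks r)) a = 1 := by
    intro a
    ext ⟨p, hp⟩ ⟨r, hr⟩
    have hbr : nBlocks p = nBlocks r := by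
      have : OrderDual.toDual (nBlocks p) = OrderDual.toDual (nBlocks r) := hp.trans hr.symm
      exact OrderDual.toDual_inj.mp this
    by_cases hpr : p = r
    · subst hpr
      simp [Matrix.toSquareBlock_def, hZapp, Matrix.one_apply]
    · have hne : ¬ p ≤ r := by
        intro hle
        exact hpr (GramAux.eq_of_le_of_nBlocks hle hbr.symm)
      have hne2 : (⟨p, hp⟩ : {i // OrderDual.toDual (nBlocks i) = a}) ≠ ⟨r, hr⟩ := by
        simp [hpr]
      simp [Matrix.toSquareBlock_def, hZapp, hne, Matrix.one_apply_ne hne2]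
  have hdetZ : Z.det = 1 := by
    rw [hbtZ.det]
    refine Finset.prod_eq_one (fun a _ => ?_)
    rw [hblocks a, Matrix.det_one]
  -- determinant of the Gram matrix
  have hdet : ((Gram n).map (Polynomial.eval δc)).det = ∏ r : Setoid (Fin n), d r := by
    rw [hfact, Matrix.det_mul, Matrix.det_mul, Matrix.det_transpose, hdetZ,
      Matrix.det_diagonal]
    ring
  rw [Matrix.isUnit_iff_isUnit_det, isUnit_iff_ne_zero, hdet]
  rw [Finset.prod_ne_zero_iff]
  have hbot : nBlocks (⊥ : Setoid (Fin n)) = n := by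
    rw [GramAux.nBlocks_bot, Nat.card_eq_fintype_card, Fintype.card_fin]
  constructor
  · intro h k hk
    have h1 := h ⊥ (Finset.mem_univ _)
    rw [hd] at h1
    simp only [Finset.prod_ne_zero_iff] at h1
    intro heq
    exact h1 k (by rwa [Finset.mem_range, hbot]) (by rw [heq]; ring)
  · intro h r _
    rw [hd]
    simp only [Finset.prod_ne_zero_iff]
    intro k hk
    have hkn : k < n := by
      rw [Finset.mem_range] at hk
      calc k < nBlocks r := hk
        _ ≤ nBlocks (⊥ : Setoid (Fin n)) := GramAux.nBlocks_le_of_le bot_le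
        _ = n := hbot
    exact sub_ne_zero.mpr (h k hkn)

end
end

section
/- Let I be a nonempty finite index set and e : I × I → ℕ a function satisfying e(i,j) ≤ min(e(i,i), e(j,j)) for all i, j ∈ I, and such that e(i,j) = e(i,i) = e(j,j) implies i = j. Let M be the I × I matrix over ℂ[δ] with M_{ij} = δ^{e(i,j)}. Then det M is a nonzero polynomial of degree Σ_{i∈I} e(i,i) with leading coefficient 1. -/
open Polynomial Finset

/- An abstract Gram-matrix lemma: if the exponents on the diagonal strictly dominate,
   then the determinant of the matrix `(δ^{e i j})_{i j}` over `ℂ[δ]` is monic of degree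
   `∑ i, e i i`. -/

theorem det_monomial_matrix_monic (I : Type*) [Fintype I] [DecidableEq I] [Nonempty I]
    (e : I → I → ℕ)
    (h1 : ∀ i j, e i j ≤ min (e i i) (e j j))
    (h2 : ∀ i j, e i j = e i i → e i i = e j j → i = j) :
    (Matrix.of fun i j => (Polynomial.X : Polynomial ℂ) ^ e i j).det ≠ 0 ∧
      (Matrix.of fun i j => (Polynomial.X : Polynomial ℂ) ^ e i j).det.natDegree
        = ∑ i, e i i ∧
      (Matrix.of fun i j => (Polynomial.X : Polynomial ℂ) ^ e i j).det.leadingCoeff = 1 := by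
  set N := ∑ i, e i i with hN
  set M : Matrix I I ℂ[X] := Matrix.of fun i j => (X : ℂ[X]) ^ e i j with hM
  have hdet : M.det = ∑ σ : Equiv.Perm I,
      Equiv.Perm.sign σ • (X : ℂ[X]) ^ (∑ i, e (σ i) i) := by
    rw [Matrix.det_apply]
    refine Finset.sum_congr rfl fun σ _ => ?_
    congr 1
    simp only [hM, Matrix.of_apply]
    rw [Finset.prod_pow_eq_pow_sum]
  have key : ∀ σ : Equiv.Perm I, σ ≠ 1 → ∑ i, e (σ i) i < N := by
    intro σ hσ
    have hle : ∀ i, e (σ i) i ≤ e i i :=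
      fun i => (h1 (σ i) i).trans (min_le_right _ _)
    by_contra h
    push_neg at h
    have heq : (∑ i, e (σ i) i) = ∑ i, e i i :=
      le_antisymm (Finset.sum_le_sum fun i _ => hle i) h
    have hall : ∀ i ∈ Finset.univ, e (σ i) i = e i i :=
      (Finset.sum_eq_sum_iff_of_le (fun i _ => hle i)).mp heq
    have hle2 : ∀ i, e (σ i) i ≤ e (σ i) (σ i) :=
      fun i => (h1 (σ i) i).trans (min_le_left _ _)
    have hsum2 : (∑ i, e (σ i) (σ i)) = ∑ i, e i i :=
      Equiv.sum_comp σ (fun i => e i i)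
    have heq2 : (∑ i, e (σ i) i) = ∑ i, e (σ i) (σ i) := by
      rw [heq, hsum2]
    have hall2 : ∀ i ∈ Finset.univ, e (σ i) i = e (σ i) (σ i) :=
      (Finset.sum_eq_sum_iff_of_le (fun i _ => hle2 i)).mp heq2
    apply hσ
    ext i
    have ha := hall i (Finset.mem_univ i)
    have hb := hall2 i (Finset.mem_univ i)
    exact h2 (σ i) i hb (by rw [← hb, ha])
  have hcoeff : M.det.coeff N = 1 := by
    rw [hdet, Polynomial.finset_sum_coeff,
      Finset.sum_eq_single (1 : Equiv.Perm I)]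
    · simp [coeff_X_pow, hN]
    · intro σ _ hσ
      have hlt := key σ hσ
      rw [Polynomial.coeff_smul, coeff_X_pow, if_neg (Nat.ne_of_lt hlt).symm]
      simp
    · intro h
      exact absurd (Finset.mem_univ _) h
  have hdall : ∀ σ : Equiv.Perm I, (∑ i, e (σ i) i) ≤ N := by
    intro σ
    rcases eq_or_ne σ 1 with rfl | hσ
    · simp [hN]
    · exact (key σ hσ).le
  have hdeg : M.det.natDegree ≤ N := by
    rw [Polynomial.natDegree_le_iff_coeff_eq_zero]
    intro m hm
    rw [hdet, Polynomial.finset_sum_coeff]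
    refine Finset.sum_eq_zero fun σ _ => ?_
    rw [Polynomial.coeff_smul, coeff_X_pow,
      if_neg (by have := hdall σ; omega)]
    simp
  have hne : M.det ≠ 0 := by
    intro h
    rw [h] at hcoeff
    simp at hcoeff
  have hNd : M.det.natDegree = N :=
    le_antisymm hdeg (Polynomial.le_natDegree_of_ne_zero (by rw [hcoeff]; exact one_ne_zero))
  exact ⟨hne, hNd, by rw [Polynomial.leadingCoeff, hNd, hcoeff]⟩
end

section
/- Fix integers n ≥ 1 and Q ≥ 1. The family of Potts vectors (v_p), where p ranges over the set partitions of {1,…,n} with at most Q blocks, is linearly independent over ℂ. -/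
/- Set partitions of `{1,…,n}` are modelled as equivalence relations (`Setoid (Fin n)`);
   `nBlocks` is the number of blocks (equivalence classes).  For a set partition `p`,
   the Potts vector `potts n Q p` is the function sending a word `w : Fin n → Fin Q`
   to `1` if `w` is constant on every block of `p`, and to `0` otherwise. -/

open scoped Classical

noncomputable section

def potts (n Q : ℕ) (p : Setoid (Fin n)) : (Fin n → Fin Q) → ℂ :=
  fun w => if ∀ x y : Fin n, p.r x y → w x = w y then 1 else 0

/-- For a set partition with at most `Q` blocks there is a word whose kernel is exactly
that partition. -/
lemma exists_word (n Q : ℕ) (p : Setoid (Fin n)) (hp : nBlocks p ≤ Q) :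
    ∃ w : Fin n → Fin Q, ∀ x y : Fin n, w x = w y ↔ p.r x y := by
  have hc : Fintype.card (Quotient p) ≤ Fintype.card (Fin Q) := by
    simpa [nBlocks, Nat.card_eq_fintype_card] using hp
  obtain ⟨f⟩ := Function.Embedding.nonempty_of_card_le hc
  refine ⟨fun x => f (Quotient.mk p x), fun x y => ?_⟩
  rw [f.injective.eq_iff, Quotient.eq]

theorem potts_linearIndependent (n Q : ℕ) (hn : 1 ≤ n) (hQ : 1 ≤ Q) :
    LinearIndependent ℂ
      (fun p : {p : Setoid (Fin n) // nBlocks p ≤ Q} => potts n Q p.1) := by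
  rw [linearIndependent_iff']
  intro s g hsum i hi
  by_contra hgi
  set t : Set {p : Setoid (Fin n) // nBlocks p ≤ Q} := {q | q ∈ s ∧ g q ≠ 0} with ht
  have htfin : t.Finite := Set.Finite.subset s.finite_toSet (fun q hq => hq.1)
  obtain ⟨p, hpt, hpmin⟩ : ∃ p ∈ t, ∀ q ∈ t, id q ≤ id p → id p = id q := by
    obtain ⟨p, hpt, hpm⟩ := htfin.exists_minimalFor id t ⟨i, hi, hgi⟩
    exact ⟨p, hpt, fun q hq hle => le_antisymm (hpm hq hle) hle⟩
  obtain ⟨w, hw⟩ := exists_word n Q p.1 p.2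
  have := congrFun hsum w
  simp only [Finset.sum_apply, Pi.smul_apply, Pi.zero_apply, smul_eq_mul] at this
  have hval : ∀ q ∈ s, g q * potts n Q q.1 w = if q.1 ≤ p.1 then g q else 0 := by
    intro q hq
    unfold potts
    by_cases h : q.1 ≤ p.1
    · simp only [h, if_true]
      rw [if_pos]
      · ring
      · intro x y hxy; exact (hw x y).2 (h hxy)
    · simp only [h, if_false]
      rw [if_neg]
      · ring
      · intro hcon
        exact h (fun x y hxy => (hw x y).1 (hcon x y hxy))
  rw [Finset.sum_congr rfl hval] at this
  have hpz : ∀ q ∈ s, (if q.1 ≤ p.1 then g q else 0) = if q = p then g p else 0 := by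
    intro q hq
    by_cases hqp : q = p
    · simp [hqp, le_refl]
    · rw [if_neg hqp]
      by_cases hle : q.1 ≤ p.1
      · rw [if_pos hle]
        by_contra hgq
        have hqt : q ∈ t := ⟨hq, hgq⟩
        have : id p = id q := hpmin q hqt (by exact_mod_cast hle)
        exact hqp this.symm
      · rw [if_neg hle]
  rw [Finset.sum_congr rfl hpz, Finset.sum_ite_eq' s p (fun _ => g p), if_pos (hpt.1)] at this
  exact hpt.2 this

end
end

section
/- Fix integers n ≥ 1 and Q ≥ 1. The ℂ-linear span of the Potts vectors v_p, where p ranges over ALL set partitions of {1,…,n}, has dimension Σ_{l=1}^{Q} S(n,l), i.e. the number of set partitions of {1,…,n} with at most Q blocks (here S(n,l) = 0 for l > n). -/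
/- Set partitions of `{1,…,n}` are modelled as equivalence relations (`Setoid (Fin n)`);
   `nBlocks` is the number of blocks, and `S n l` is the Stirling number of the second
   kind.  For a set partition `p`, the Potts vector `potts n Q p` sends a word
   `w : Fin n → Fin Q` to `1` if `w` is constant on every block of `p`, else to `0`. -/

open scoped Classical

noncomputable section

instance setoidFinite' (n : ℕ) : Finite (Setoid (Fin n)) :=
  Finite.of_injective (fun s : Setoid (Fin n) => s.r)
    (fun s t h => Setoid.ext fun a b => by rw [show s.r = t.r from h])

instance setoidFintype' (n : ℕ) : Fintype (Setoid (Fin n)) := Fintype.ofFinite _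

def eVec (n Q : ℕ) (q : Setoid (Fin n)) : (Fin n → Fin Q) → ℂ :=
  fun w => if Setoid.ker w = q then 1 else 0

lemma nBlocks_ker_le (n Q : ℕ) (w : Fin n → Fin Q) : nBlocks (Setoid.ker w) ≤ Q := by
  have h : Function.Injective (Quotient.lift w (fun a b h => h : ∀ a b, (Setoid.ker w) a b → w a = w b)) := by
    rintro ⟨a⟩ ⟨b⟩ h
    exact Quotient.sound h
  have := Nat.card_le_card_of_injective _ h
  simpa [nBlocks, Nat.card_eq_fintype_card] using this

lemma exists_ker (n Q : ℕ) (q : Setoid (Fin n)) (h : nBlocks q ≤ Q) :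
    ∃ w : Fin n → Fin Q, Setoid.ker w = q := by
  have hne : Nonempty (Quotient q ↪ Fin Q) := by
    apply Function.Embedding.nonempty_of_card_le
    simpa [nBlocks, Nat.card_eq_fintype_card] using h
  obtain ⟨f⟩ := hne
  refine ⟨fun x => f ⟦x⟧, ?_⟩
  ext a b
  rw [Setoid.ker_def]
  exact ⟨fun h' => Quotient.exact (f.injective h'), fun h' => congrArg f (Quotient.sound h')⟩

lemma eVec_zero (n Q : ℕ) (q : Setoid (Fin n)) (h : Q < nBlocks q) : eVec n Q q = 0 := by
  funext w
  simp only [eVec, Pi.zero_apply, ite_eq_right_iff]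
  intro hk
  exact absurd (hk ▸ nBlocks_ker_le n Q w) (not_le.mpr h)

lemma potts_eq_sum (n Q : ℕ) (p : Setoid (Fin n)) :
    potts n Q p = ∑ q ∈ Finset.univ.filter (p ≤ ·), eVec n Q q := by
  funext w
  have : (∑ q ∈ Finset.univ.filter (p ≤ ·), eVec n Q q) w
      = ∑ q ∈ Finset.univ.filter (p ≤ ·), (if Setoid.ker w = q then (1:ℂ) else 0) := by
    simp [eVec]
  rw [this, Finset.sum_ite_eq]
  simp only [Finset.mem_filter, Finset.mem_univ, true_and]
  have hle : p ≤ Setoid.ker w ↔ ∀ x y : Fin n, p.r x y → w x = w y := by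
    rw [Setoid.le_def]
    exact ⟨fun h x y hxy => h hxy, fun h x y hxy => h x y hxy⟩
  simp [potts, hle]

lemma eVec_mem_span (n Q : ℕ) (q : Setoid (Fin n)) :
    eVec n Q q ∈ Submodule.span ℂ (Set.range (potts n Q)) := by
  induction q using WellFoundedGT.induction with
  | _ q ih =>
    have hsplit : Finset.univ.filter (q ≤ ·) = insert q (Finset.univ.filter (q < ·)) := by
      ext p
      simp only [Finset.mem_filter, Finset.mem_univ, true_and, Finset.mem_insert]
      rw [le_iff_lt_or_eq]
      tauto
    have hnot : q ∉ Finset.univ.filter (q < ·) := by simp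
    have hsum := potts_eq_sum n Q q
    rw [hsplit, Finset.sum_insert hnot] at hsum
    have : eVec n Q q = potts n Q q - ∑ p ∈ Finset.univ.filter (q < ·), eVec n Q p := by
      rw [hsum]; abel
    rw [this]
    refine Submodule.sub_mem _ (Submodule.subset_span ⟨q, rfl⟩) ?_
    exact Submodule.sum_mem _ fun p hp => ih p (Finset.mem_filter.mp hp).2

theorem potts_span_finrank (n Q : ℕ) (hn : 1 ≤ n) (hQ : 1 ≤ Q) :
    Module.finrank ℂ (Submodule.span ℂ (Set.range (potts n Q)))
      = ∑ l ∈ Finset.Icc 1 Q, S n l := by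
  set D := {q : Setoid (Fin n) // nBlocks q ≤ Q}
  set f : D → ((Fin n → Fin Q) → ℂ) := fun q => eVec n Q q.1 with hf
  -- spans coincide
  have hspan : Submodule.span ℂ (Set.range (potts n Q)) = Submodule.span ℂ (Set.range f) := by
    apply le_antisymm
    · rw [Submodule.span_le]
      rintro _ ⟨p, rfl⟩
      rw [potts_eq_sum n Q p]
      refine Submodule.sum_mem _ fun q _ => ?_
      by_cases hq : nBlocks q ≤ Q
      · exact Submodule.subset_span ⟨⟨q, hq⟩, rfl⟩
      · rw [eVec_zero n Q q (not_le.mp hq)]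
        exact Submodule.zero_mem _
    · rw [Submodule.span_le]
      rintro _ ⟨q, rfl⟩
      exact eVec_mem_span n Q q.1
  -- linear independence
  have hli : LinearIndependent ℂ f := by
    rw [Fintype.linearIndependent_iff]
    intro g hg q₀
    obtain ⟨w₀, hw₀⟩ := exists_ker n Q q₀.1 q₀.2
    have h1 := congrFun hg w₀
    rw [Finset.sum_apply] at h1
    have h2 : ∀ q : D, (g q • f q) w₀ = if q₀ = q then g q else 0 := by
      intro q
      simp only [Pi.smul_apply, hf, eVec, hw₀, smul_eq_mul]
      by_cases h : q₀ = q
      · simp [h, ← Subtype.ext_iff, Subtype.ext_iff.mp h]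
      · have : q₀.1 ≠ q.1 := fun hc => h (Subtype.ext hc)
        simp [this, h]
    rw [Finset.sum_congr rfl fun q _ => h2 q, Finset.sum_ite_eq] at h1
    simpa using h1
  rw [hspan, finrank_span_eq_card hli]
  -- counting
  have hcard : Fintype.card D = (Finset.univ.filter (fun q : Setoid (Fin n) => nBlocks q ≤ Q)).card :=
    Fintype.card_subtype _
  rw [hcard]
  rw [Finset.card_eq_sum_card_fiberwise (f := nBlocks) (t := Finset.Icc 1 Q) ?_]
  · refine Finset.sum_congr rfl fun l hl => ?_
    have hlQ : l ≤ Q := (Finset.mem_Icc.mp hl).2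
    have : Finset.filter (fun q => nBlocks q = l) (Finset.univ.filter (fun q : Setoid (Fin n) => nBlocks q ≤ Q))
        = Finset.univ.filter (fun q : Setoid (Fin n) => nBlocks q = l) := by
      ext q
      simp only [Finset.mem_filter, Finset.mem_univ, true_and]
      constructor
      · tauto
      · intro h; exact ⟨h ▸ hlQ, h⟩
    rw [this, S, Nat.card_eq_fintype_card, Fintype.card_subtype]
  · intro q hq
    simp only [Finset.mem_coe, Finset.mem_filter, Finset.mem_univ, true_and] at hq
    refine Finset.mem_Icc.mpr ⟨?_, hq⟩
    have : Nonempty (Quotient q) := ⟨⟦⟨0, hn⟩⟧⟩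
    exact Nat.one_le_iff_ne_zero.mpr (Nat.card_pos).ne'

end
end

section
/- For n ≥ 1 and Q = 2, the ℂ-linear span of the Potts vectors v_p, where p ranges over all set partitions of {1,…,n}, has dimension 2^{n−1}. -/
/- Set partitions of `{1,…,n}` are modelled as equivalence relations (`Setoid (Fin n)`);
   `nBlocks` is the number of blocks (equivalence classes).  For a set partition `p`,
   the Potts vector `potts n Q p` is the function sending a word `w : Fin n → Fin Q`
   to `1` if `w` is constant on every block of `p`, and to `0` otherwise. -/

open scoped Classical

noncomputable section

namespace PottsAux

/-- The spin flip on `Fin 2`. -/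
def flip2 : Fin 2 → Fin 2 := fun x => 1 - x

lemma flip2_flip2 (x : Fin 2) : flip2 (flip2 x) = x := by revert x; decide

lemma flip2_ne (x : Fin 2) : flip2 x ≠ x := by revert x; decide

lemma flip2_zero : flip2 0 = 1 := by decide

lemma flip2_inj {a b : Fin 2} (h : flip2 a = flip2 b) : a = b := by
  rw [← flip2_flip2 a, h, flip2_flip2]

lemma fin2_cases (p : Fin 2) (h : p ≠ 0) : p = 1 := by revert p; decide

lemma fin2_third {a b x : Fin 2} (hab : a ≠ b) (hxa : x ≠ a) : x = b := by
  revert a b x; decide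

lemma fin2_pair (p q : Fin 2) : p = q ∨ p = flip2 q := by revert p q; decide

lemma fin2_nonconst (g : Fin 2 → Fin 2) (h : ∃ s t, g s ≠ g t) :
    (∀ v, g v = v) ∨ (∀ v, g v = flip2 v) := by revert g; decide

/-- The subspace of flip-invariant functions. -/
def Sinv (n : ℕ) : Submodule ℂ ((Fin n → Fin 2) → ℂ) where
  carrier := {f | ∀ w, f (flip2 ∘ w) = f w}
  add_mem' := by intro a b ha hb w; simp [ha w, hb w]
  zero_mem' := by intro w; rfl
  smul_mem' := by intro c f hf w; simp [hf w]

lemma potts_mem_Sinv (n : ℕ) (p : Setoid (Fin n)) : potts n 2 p ∈ Sinv n := by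
  intro w
  unfold potts
  congr 1
  apply propext
  constructor
  · intro h x y hxy
    exact flip2_inj (h x y hxy)
  · intro h x y hxy
    simp only [Function.comp_apply, h x y hxy]

/-- basic vector: indicator of the pair `{u, flip2 ∘ u}`. -/
def euV (n : ℕ) (u : Fin n → Fin 2) : (Fin n → Fin 2) → ℂ :=
  fun w => if w = u ∨ w = flip2 ∘ u then 1 else 0

lemma euV_const (n : ℕ) (hn : 1 ≤ n) (u : Fin n → Fin 2) (hu : ∀ x y, u x = u y) :
    euV n u = potts n 2 (⊤ : Setoid (Fin n)) := by
  funext w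
  unfold euV potts
  have hiff : (w = u ∨ w = flip2 ∘ u) ↔
      ∀ x y : Fin n, (⊤ : Setoid (Fin n)).r x y → w x = w y := by
    constructor
    · rintro (rfl | rfl) x y _
      · exact hu x y
      · simp only [Function.comp_apply, hu x y]
    · intro hwt
      have hw' : ∀ x y, w x = w y := fun x y => hwt x y trivial
      rcases fin2_pair (w ⟨0, hn⟩) (u ⟨0, hn⟩) with h | h
      · left; funext x
        rw [hw' x ⟨0, hn⟩, h, hu ⟨0, hn⟩ x]
      · right; funext x
        simp only [Function.comp_apply]
        rw [hw' x ⟨0, hn⟩, h, hu ⟨0, hn⟩ x]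
  simp only [hiff]

lemma euV_nonconst (n : ℕ) (u : Fin n → Fin 2) (a b : Fin n) (hab : u a ≠ u b) :
    euV n u = potts n 2 (Setoid.ker u) - potts n 2 (⊤ : Setoid (Fin n)) := by
  funext w
  simp only [Pi.sub_apply]
  unfold euV potts
  have hkerr : ∀ x y : Fin n, (Setoid.ker u).r x y ↔ u x = u y := fun x y => Iff.rfl
  by_cases hker : ∀ x y : Fin n, u x = u y → w x = w y
  · by_cases hconst : ∀ x y : Fin n, w x = w y
    · -- w constant: LHS = 0, RHS = 1 - 1 = 0
      rw [if_neg, if_pos, if_pos, sub_self]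
      · intro x y _; exact hconst x y
      · intro x y h; exact hker x y h
      · rintro (rfl | rfl)
        · exact hab (hconst a b)
        · exact hab (flip2_inj (hconst a b))
    · -- w in the pair
      rw [if_pos, if_pos, if_neg, sub_zero]
      · intro h; exact hconst (fun x y => h x y trivial)
      · intro x y h; exact hker x y h
      · -- show w = u ∨ w = flip2 ∘ u
        set g : Fin 2 → Fin 2 := fun v => if v = u a then w a else w b with hg
        have hwg : ∀ x, w x = g (u x) := by
          intro x
          by_cases hx : u x = u a
          · rw [hg]; simp only [hx, if_pos rfl]
            exact hker x a hx
          · have hxb : u x = u b := fin2_third hab hx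
            rw [hg]; simp only [if_neg hx]
            exact hker x b hxb
        have hgnc : ∃ s t, g s ≠ g t := by
          push_neg at hconst
          obtain ⟨x, y, hxy⟩ := hconst
          exact ⟨u x, u y, by rw [← hwg x, ← hwg y]; exact hxy⟩
        rcases fin2_nonconst g hgnc with h | h
        · left; funext x; rw [hwg x, h]
        · right; funext x; rw [hwg x, h]; rfl
  · -- ¬hker: then w not in pair and not constant
    have hconst : ¬ ∀ x y : Fin n, w x = w y := fun h => hker (fun x y _ => h x y)
    rw [if_neg, if_neg, if_neg, sub_zero]
    · intro h; exact hconst (fun x y => h x y trivial)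
    · intro h; exact hker (fun x y hxy => h x y hxy)
    · rintro (rfl | rfl)
      · exact hker (fun x y h => h)
      · exact hker (fun x y h => by simp only [Function.comp_apply, h])

lemma euV_mem_span (n : ℕ) (hn : 1 ≤ n) (u : Fin n → Fin 2) :
    euV n u ∈ Submodule.span ℂ (Set.range (potts n 2)) := by
  by_cases hu : ∀ x y, u x = u y
  · rw [euV_const n hn u hu]
    exact Submodule.subset_span ⟨⊤, rfl⟩
  · push_neg at hu
    obtain ⟨a, b, hab⟩ := hu
    rw [euV_nonconst n u a b hab]
    exact sub_mem (Submodule.subset_span ⟨Setoid.ker u, rfl⟩)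
      (Submodule.subset_span ⟨⊤, rfl⟩)

lemma Sinv_le_span (n : ℕ) (hn : 1 ≤ n) :
    Sinv n ≤ Submodule.span ℂ (Set.range (potts n 2)) := by
  intro f hf
  set i0 : Fin n := ⟨0, hn⟩
  have hrepr : f = ∑ u ∈ Finset.univ.filter (fun u : Fin n → Fin 2 => u i0 = 0),
      f u • euV n u := by
    funext w
    rw [Finset.sum_apply]
    simp only [Pi.smul_apply, smul_eq_mul]
    by_cases hw : w i0 = 0
    · rw [Finset.sum_eq_single w]
      · rw [show euV n w w = 1 from if_pos (Or.inl rfl), mul_one]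
      · intro u hu hne
        rw [Finset.mem_filter] at hu
        have h0 : euV n u w = 0 := by
          apply if_neg
          rintro (h | h)
          · exact hne h.symm
          · have h2 : w i0 = flip2 (u i0) := congrFun h i0
            rw [hw, hu.2] at h2
            exact absurd h2 (by decide)
        rw [h0, mul_zero]
      · intro h
        exact absurd (Finset.mem_filter.mpr ⟨Finset.mem_univ w, hw⟩) h
    · have hw1 : w i0 = 1 := fin2_cases _ hw
      rw [Finset.sum_eq_single (flip2 ∘ w)]
      · have h1 : euV n (flip2 ∘ w) w = 1 := by
          apply if_pos
          right; funext x
          rw [Function.comp_apply, Function.comp_apply, flip2_flip2]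
        rw [h1, mul_one, hf w]
      · intro u hu hne
        rw [Finset.mem_filter] at hu
        have h0 : euV n u w = 0 := by
          apply if_neg
          rintro (h | h)
          · have h2 : (1 : Fin 2) = 0 := by rw [← hw1, h, hu.2]
            exact absurd h2 (by decide)
          · apply hne
            funext x
            rw [Function.comp_apply, congrFun h x, Function.comp_apply, flip2_flip2]
        rw [h0, mul_zero]
      · intro h
        apply absurd _ h
        rw [Finset.mem_filter]
        refine ⟨Finset.mem_univ _, ?_⟩
        rw [Function.comp_apply, hw1]
        decide
  rw [hrepr]
  exact Submodule.sum_mem _ (fun u _ => Submodule.smul_mem _ _ (euV_mem_span n hn u))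

lemma span_eq_Sinv (n : ℕ) (hn : 1 ≤ n) :
    Submodule.span ℂ (Set.range (potts n 2)) = Sinv n := by
  apply le_antisymm
  · rw [Submodule.span_le]
    rintro _ ⟨p, rfl⟩
    exact potts_mem_Sinv n p
  · exact Sinv_le_span n hn

/-- Restriction to words vanishing at `0` is a linear equivalence. -/
def SinvEquiv (n : ℕ) (hn : 1 ≤ n) :
    Sinv n ≃ₗ[ℂ] ({w : Fin n → Fin 2 // w ⟨0, hn⟩ = 0} → ℂ) where
  toFun f a := f.1 a.1
  map_add' f g := rfl
  map_smul' c f := rfl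
  invFun g := ⟨fun w => if h : w ⟨0, hn⟩ = 0 then g ⟨w, h⟩
      else g ⟨flip2 ∘ w, by
        rw [Function.comp_apply, fin2_cases _ h]; decide⟩, by
    intro w
    by_cases h : w ⟨0, hn⟩ = 0
    · have h' : ¬ (flip2 ∘ w) ⟨0, hn⟩ = 0 := by
        rw [Function.comp_apply, h]; decide
      simp only [dif_neg h', dif_pos h]
      congr 1
      apply Subtype.ext
      funext x
      simp only [Function.comp_apply, flip2_flip2]
    · have h' : (flip2 ∘ w) ⟨0, hn⟩ = 0 := by
        rw [Function.comp_apply, fin2_cases _ h]; decide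
      simp only [dif_pos h', dif_neg h]⟩
  left_inv f := by
    apply Subtype.ext
    funext w
    by_cases h : w ⟨0, hn⟩ = 0
    · simp only [dif_pos h]
    · simp only [dif_neg h]
      exact f.2 w
  right_inv g := by
    funext a
    simp only [dif_pos a.2]

/-- Counting the words vanishing at `0`. -/
def wordEquiv (n : ℕ) (hn : 1 ≤ n) :
    {w : Fin n → Fin 2 // w ⟨0, hn⟩ = 0} ≃ ({j : Fin n // j ≠ ⟨0, hn⟩} → Fin 2) where
  toFun w j := w.1 j.1
  invFun g := ⟨fun j => if h : j = ⟨0, hn⟩ then 0 else g ⟨j, h⟩, by simp⟩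
  left_inv w := by
    apply Subtype.ext
    funext j
    by_cases h : j = ⟨0, hn⟩
    · simp only [dif_pos h]
      rw [h, w.2]
    · simp only [dif_neg h]
  right_inv g := by
    funext j
    simp only [dif_neg j.2]

lemma card_words (n : ℕ) (hn : 1 ≤ n) :
    Fintype.card {w : Fin n → Fin 2 // w ⟨0, hn⟩ = 0} = 2 ^ (n - 1) := by
  rw [Fintype.card_congr (wordEquiv n hn), Fintype.card_fun, Fintype.card_fin]
  congr 1
  have : Fintype.card {j : Fin n // j ≠ ⟨0, hn⟩}
      = Fintype.card (Fin n) - Fintype.card {j : Fin n // j = ⟨0, hn⟩} := by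
    exact Fintype.card_subtype_compl (fun j : Fin n => j = ⟨0, hn⟩)
  rw [this, Fintype.card_subtype_eq, Fintype.card_fin]

end PottsAux

theorem potts_span_finrank_two (n : ℕ) (hn : 1 ≤ n) :
    Module.finrank ℂ (Submodule.span ℂ (Set.range (potts n 2)))
      = 2 ^ (n - 1) := by
  rw [PottsAux.span_eq_Sinv n hn]
  rw [LinearEquiv.finrank_eq (PottsAux.SinvEquiv n hn)]
  rw [Module.finrank_fintype_fun_eq_card]
  exact PottsAux.card_words n hn

end
end
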